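/- (Triviality of smooth 1-cocycles) Let K/k be a Galois field extension with Galois group G = Gal(K/k) carrying the Krull topology, and let M be a K-vector space with a smooth semilinear action ρ of G (ρ(στ)=ρ(σ)ρ(τ), ρ(1)=id, ρ(σ)(c·m)=σ(c)·ρ(σ)(m), all stabilizers open). For a K-linear automorphism T of M write ^σT = ρ(σ)∘T∘ρ(σ)^{−1}. Let δ : G → GL_K(M) be a 1-cocycle, i.e. δ(στ) = δ(σ) ∘ ^σδ(τ) for all σ,τ ∈ G, and assume the twisted action (σ, m) ↦ δ(σ)(ρ(σ)(m)) is smooth, i.e. for each m ∈ M there is an open subgroup of G on which δ(σ)(ρ(σ)(m)) = m. Then there exists α ∈ GL_K(M) such that δ(σ) = α^{−1} ∘ (^σα) for every σ ∈ G. -/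

import Mathlib

open IntermediateField Submodule

lemma descent_span
    (k K : Type*) [Field k] [Field K] [Algebra k K] [IsGalois k K]
    (M : Type*) [AddCommGroup M] [Module K M]
    (ρ : (K ≃ₐ[k] K) → M ≃+ M)
    (hone : ρ 1 = AddEquiv.refl M)
    (hmul : ∀ (σ τ : K ≃ₐ[k] K) (m : M), ρ (σ * τ) m = ρ σ (ρ τ m))
    (hsemi : ∀ (σ : K ≃ₐ[k] K) (c : K) (m : M), ρ σ (c • m) = σ c • ρ σ m)
    (hsmooth : ∀ m : M, IsOpen {σ : K ≃ₐ[k] K | ρ σ m = m}) :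
    Submodule.span K {m : M | ∀ σ, ρ σ m = m} = ⊤ := by
  classical
  rw [eq_top_iff]
  rintro m -
  have h1 : (1 : K ≃ₐ[k] K) ∈ {σ : K ≃ₐ[k] K | ρ σ m = m} := by simp [hone]
  obtain ⟨E, hEfin, hE⟩ := (krullTopology_mem_nhds_one_iff k K _).mp
    ((hsmooth m).mem_nhds h1)
  set E' : IntermediateField k K := normalClosure k E K with hE'def
  have hle : E ≤ E' := le_normalClosure E
  haveI : Normal k K := IsGalois.to_normal
  haveI : FiniteDimensional k E' := by
    unfold E'
    infer_instance
  haveI : Normal k E' := by unfold E'; infer_instance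
  -- elements of fixingSubgroup E' fix m
  have hfixm : ∀ n ∈ E'.fixingSubgroup, ρ n m = m := fun n hn =>
    hE (IntermediateField.fixingSubgroup_antitone hle hn)
  set π : (K ≃ₐ[k] K) →* (E' ≃ₐ[k] E') := AlgEquiv.restrictNormalHom E' with hπdef
  have hπsurj : Function.Surjective π := AlgEquiv.restrictNormalHom_surjective K
  set s : (E' ≃ₐ[k] E') → (K ≃ₐ[k] K) := Function.surjInv hπsurj with hsdef
  have hπs : ∀ g, π (s g) = g := Function.surjInv_eq hπsurj
  have hker : ∀ n : K ≃ₐ[k] K, π n = 1 → n ∈ E'.fixingSubgroup := by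
    intro n hn
    rw [← IntermediateField.restrictNormalHom_ker E']
    exact hn
  -- well-definedness on cosets
  have happly : ∀ (σ : K ≃ₐ[k] K) (c : E'), σ (c : K) = algebraMap E' K (π σ c) := by
    intro σ c
    exact (AlgEquiv.restrictNormalHom_apply E' σ c).symm
  have hwell : ∀ (σ : K ≃ₐ[k] K) (c : E'), ρ σ ((c : K) • m) = ρ (s (π σ)) ((c : K) • m) := by
    intro σ c
    have hn : s (π σ) * ((s (π σ))⁻¹ * σ) = σ := by group
    have hnk : ((s (π σ))⁻¹ * σ) ∈ E'.fixingSubgroup := by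
      apply hker
      rw [map_mul, map_inv, hπs]
      group
    have hcfix : ((s (π σ))⁻¹ * σ) (c : K) = (c : K) :=
      ((IntermediateField.mem_fixingSubgroup_iff E' _).mp hnk) c c.2
    calc ρ σ ((c : K) • m) = ρ (s (π σ) * ((s (π σ))⁻¹ * σ)) ((c : K) • m) := by rw [hn]
      _ = ρ (s (π σ)) (ρ ((s (π σ))⁻¹ * σ) ((c : K) • m)) := hmul _ _ _
      _ = ρ (s (π σ)) ((c : K) • m) := by
          rw [hsemi, hcfix, hfixm _ hnk]
  -- the averaged vectors
  set mc : E' → M := fun c => ∑ g : E' ≃ₐ[k] E', ρ (s g) ((c : K) • m) with hmcdef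
  have hmcfix : ∀ c : E', ∀ τ, ρ τ (mc c) = mc c := by
    intro c τ
    rw [hmcdef]
    simp only
    rw [map_sum]
    have step : ∀ g : E' ≃ₐ[k] E', ρ τ (ρ (s g) ((c:K) • m)) = ρ (s (π τ * g)) ((c:K) • m) := by
      intro g
      rw [← hmul, hwell (τ * s g) c, map_mul, hπs]
    rw [Finset.sum_congr rfl (fun g _ => step g)]
    exact Fintype.sum_equiv (Equiv.mulLeft (π τ))
      (fun g => ρ (s (π τ * g)) ((c:K) • m)) (fun g => ρ (s g) ((c:K) • m)) (fun g => rfl)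
  -- linear map Φ
  set Φ : ((E' ≃ₐ[k] E') → K) →ₗ[K] M :=
    { toFun := fun w => ∑ g : E' ≃ₐ[k] E', w g • ρ (s g) m
      map_add' := by intro x y; simp [add_smul, Finset.sum_add_distrib]
      map_smul' := by intro a x; simp [smul_smul, Finset.smul_sum] } with hΦdef
  have hΦsingle : Φ (Pi.single 1 1) = m := by
    rw [hΦdef]
    simp only [LinearMap.coe_mk, AddHom.coe_mk]
    rw [Finset.sum_eq_single (1 : E' ≃ₐ[k] E')]
    · have : s 1 ∈ E'.fixingSubgroup := hker _ (hπs 1)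
      simp [hfixm _ this]
    · intro g _ hg
      simp [Pi.single_apply, hg]
    · simp
  set v : E' → ((E' ≃ₐ[k] E') → K) := fun c g => algebraMap E' K (g c) with hvdef
  have hΦv : ∀ c : E', Φ (v c) = mc c := by
    intro c
    rw [hΦdef, hmcdef]
    simp only [LinearMap.coe_mk, AddHom.coe_mk]
    refine Finset.sum_congr rfl (fun g _ => ?_)
    rw [hsemi, happly, hπs]
  -- span of the v c is everything
  have hvspan : Submodule.span K (Set.range v) = ⊤ := by
    by_contra hne
    obtain ⟨f, hf0, hfbot⟩ := Submodule.exists_dual_map_eq_bot_of_lt_top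
      (lt_top_iff_ne_top.mpr hne) inferInstance
    have hfv : ∀ c : E', f (v c) = 0 := by
      intro c
      have : f (v c) ∈ Submodule.map f (Submodule.span K (Set.range v)) :=
        Submodule.mem_map_of_mem (Submodule.subset_span ⟨c, rfl⟩)
      rw [hfbot] at this
      exact (Submodule.mem_bot K).mp this
    -- characters
    set φ : (E' ≃ₐ[k] E') → (E' →* K) :=
      fun g => { toFun := fun c => algebraMap E' K (g c),
                 map_one' := by simp,
                 map_mul' := by simp } with hφdef
    have hφx : ∀ g x, φ g x = algebraMap E' K (g x) := fun g x => rfl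
    have hφinj : Function.Injective φ := by
      intro g₁ g₂ h
      ext x
      have hx : algebraMap E' K (g₁ x) = algebraMap E' K (g₂ x) := by
        rw [← hφx, ← hφx, h]
      exact_mod_cast hx
    have hli : LinearIndependent K (fun g : E' ≃ₐ[k] E' => ⇑(φ g)) :=
      (linearIndependent_monoidHom E' K).comp φ hφinj
    set lam : (E' ≃ₐ[k] E') → K := fun g => f (Pi.single g 1) with hlamdef
    have hsum : ∀ x : (E' ≃ₐ[k] E') → K, f x = ∑ g : E' ≃ₐ[k] E', x g * lam g := by
      intro x
      conv_lhs => rw [← Finset.univ_sum_single x]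
      rw [map_sum]
      refine Finset.sum_congr rfl (fun g _ => ?_)
      have : Pi.single g (x g) = x g • (Pi.single g (1:K) : (E' ≃ₐ[k] E') → K) := by
        ext g'
        by_cases h : g = g' <;> simp [Pi.single_apply, h]
      rw [this, map_smul, smul_eq_mul]
    have hlam0 : ∀ g, lam g = 0 := by
      have h0 : ∑ g : E' ≃ₐ[k] E', lam g • (⇑(φ g) : E' → K) = 0 := by
        funext c
        simp only [Finset.sum_apply, Pi.smul_apply, smul_eq_mul, Pi.zero_apply]
        have := hfv c
        rw [hsum] at this
        rw [← this]
        refine Finset.sum_congr rfl (fun g _ => ?_)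
        rw [mul_comm]
        rfl
      exact Fintype.linearIndependent_iff.mp hli _ h0
    exact hf0 (LinearMap.ext fun x => by rw [hsum]; simp [hlam0])
  -- conclude
  have hmem : Pi.single (1 : E' ≃ₐ[k] E') (1:K) ∈ Submodule.span K (Set.range v) := by
    rw [hvspan]; trivial
  obtain ⟨cf, hcfsupp, hcfsum⟩ := mem_span_set.mp hmem
  have : m = cf.sum fun w r => r • Φ w := by
    rw [← hΦsingle, ← hcfsum, map_finsuppSum]
    simp [Finsupp.sum, map_smul]
  rw [this]
  refine Submodule.sum_mem _ (fun w hw => Submodule.smul_mem _ _ ?_)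
  obtain ⟨c, rfl⟩ := hcfsupp hw
  rw [hΦv]
  exact Submodule.subset_span (fun τ => hmcfix c τ)

lemma exists_fixed_basis
    (k K : Type*) [Field k] [Field K] [Algebra k K] [IsGalois k K]
    (M : Type*) [AddCommGroup M] [Module K M]
    (ρ : (K ≃ₐ[k] K) → M ≃+ M)
    (hone : ρ 1 = AddEquiv.refl M)
    (hmul : ∀ (σ τ : K ≃ₐ[k] K) (m : M), ρ (σ * τ) m = ρ σ (ρ τ m))
    (hsemi : ∀ (σ : K ≃ₐ[k] K) (c : K) (m : M), ρ σ (c • m) = σ c • ρ σ m)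
    (hsmooth : ∀ m : M, IsOpen {σ : K ≃ₐ[k] K | ρ σ m = m}) :
    ∃ (s : Set M) (b : Module.Basis s K M), ∀ (i : s) (σ : K ≃ₐ[k] K), ρ σ (b i) = b i := by
  obtain ⟨b, hbsub, hbspan, hbli⟩ := exists_linearIndependent K {m : M | ∀ σ, ρ σ m = m}
  rw [descent_span k K M ρ hone hmul hsemi hsmooth] at hbspan
  refine ⟨b, Module.Basis.mk hbli ?_, fun i σ => ?_⟩
  · rw [Subtype.range_coe]; exact hbspan.ge
  · simpa only [Module.Basis.mk_apply] using hbsub i.2 σ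


/-- **Triviality of smooth 1-cocycles.** Let `K/k` be a Galois extension
with Galois group `G` (with the Krull topology), `M` a `K`-vector space with a smooth
semilinear `G`-action `ρ`, and `δ : G → GL_K(M)` a 1-cocycle (writing
`^σT = ρ σ ∘ T ∘ (ρ σ)⁻¹`, the cocycle condition is `δ(στ) = δ(σ) ∘ ^σδ(τ)`) such that
the twisted action `(σ, m) ↦ δ σ (ρ σ m)` is smooth.  Then there is `α ∈ GL_K(M)` with
`δ(σ) = α⁻¹ ∘ ^σα` for every `σ ∈ G`. -/
theorem smooth_one_cocycle_is_coboundary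
    (k K : Type*) [Field k] [Field K] [Algebra k K] [IsGalois k K]
    (M : Type*) [AddCommGroup M] [Module K M]
    (ρ : (K ≃ₐ[k] K) → M ≃+ M)
    (hone : ρ 1 = AddEquiv.refl M)
    (hmul : ∀ (σ τ : K ≃ₐ[k] K) (m : M), ρ (σ * τ) m = ρ σ (ρ τ m))
    (hsemi : ∀ (σ : K ≃ₐ[k] K) (c : K) (m : M), ρ σ (c • m) = σ c • ρ σ m)
    (hsmooth : ∀ m : M, IsOpen {σ : K ≃ₐ[k] K | ρ σ m = m})
    (δ : (K ≃ₐ[k] K) → (M ≃ₗ[K] M))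
    -- cocycle condition `δ(στ) = δ(σ) ∘ ^σδ(τ)` where `^σT = ρ σ ∘ T ∘ (ρ σ)⁻¹`
    (hcocycle : ∀ (σ τ : K ≃ₐ[k] K) (m : M),
      δ (σ * τ) m = δ σ (ρ σ (δ τ ((ρ σ).symm m))))
    -- the twisted action `(σ, m) ↦ δ σ (ρ σ m)` is smooth
    (htwist : ∀ m : M, IsOpen {σ : K ≃ₐ[k] K | δ σ (ρ σ m) = m}) :
    ∃ α : M ≃ₗ[K] M, ∀ (σ : K ≃ₐ[k] K) (m : M),
      δ σ m = α.symm (ρ σ (α ((ρ σ).symm m))) := by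
  
  classical
  have hδ1 : ∀ m, δ 1 m = m := by
    intro m
    have h := hcocycle 1 1 m
    rw [one_mul, hone] at h
    simp only [AddEquiv.refl_apply, AddEquiv.refl_symm] at h
    exact ((δ 1).injective h).symm
  set ρ' : (K ≃ₐ[k] K) → M ≃+ M := fun σ => (ρ σ).trans (δ σ).toAddEquiv with hρ'def
  have hρ'apply : ∀ σ m, ρ' σ m = δ σ (ρ σ m) := fun σ m => rfl
  have hone' : ρ' 1 = AddEquiv.refl M := by
    ext m
    rw [hρ'apply, hone]
    simpa using hδ1 m
  have hmul' : ∀ (σ τ : K ≃ₐ[k] K) (m : M), ρ' (σ * τ) m = ρ' σ (ρ' τ m) := by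
    intro σ τ m
    have hinner : (ρ σ).symm (ρ (σ * τ) m) = ρ τ m := by
      rw [hmul]; exact (ρ σ).symm_apply_apply _
    rw [hρ'apply, hρ'apply, hρ'apply, hcocycle σ τ (ρ (σ * τ) m), hinner]
  have hsemi' : ∀ (σ : K ≃ₐ[k] K) (c : K) (m : M), ρ' σ (c • m) = σ c • ρ' σ m := by
    intro σ c m
    rw [hρ'apply, hρ'apply, hsemi, map_smul]
  have hsmooth' : ∀ m : M, IsOpen {σ : K ≃ₐ[k] K | ρ' σ m = m} := htwist
  obtain ⟨s₁, b₁, hb₁⟩ := exists_fixed_basis k K M ρ' hone' hmul' hsemi' hsmooth'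
  obtain ⟨s₂, b₂, hb₂⟩ := exists_fixed_basis k K M ρ hone hmul hsemi hsmooth
  set e : s₁ ≃ s₂ := b₁.indexEquiv b₂ with hedef
  set α : M ≃ₗ[K] M := b₁.equiv b₂ e with hαdef
  have hα : ∀ i : s₁, α (b₁ i) = b₂ (e i) := fun i => b₁.equiv_apply i b₂ e
  have key : ∀ (σ : K ≃ₐ[k] K) (x : M), α (δ σ (ρ σ x)) = ρ σ (α x) := by
    intro σ x
    have hx : x = (b₁.repr x).sum fun i c => c • b₁ i := by
      conv_lhs => rw [← b₁.linearCombination_repr x]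
      rw [Finsupp.linearCombination_apply]
    rw [hx]
    calc α (δ σ (ρ σ ((b₁.repr x).sum fun i c => c • b₁ i)))
        = α (δ σ ((b₁.repr x).sum fun i c => σ c • ρ σ (b₁ i))) := by
          rw [map_finsuppSum (ρ σ)]
          congr 2
          exact Finsupp.sum_congr fun i _ => hsemi σ _ _
      _ = α ((b₁.repr x).sum fun i c => σ c • b₁ i) := by
          rw [map_finsuppSum (δ σ)]
          congr 1
          refine Finsupp.sum_congr fun i _ => ?_
          rw [map_smul]
          congr 1
          exact hb₁ i σ
      _ = (b₁.repr x).sum fun i c => σ c • b₂ (e i) := by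
          rw [map_finsuppSum α]
          refine Finsupp.sum_congr fun i _ => ?_
          rw [map_smul, hα]
      _ = ρ σ (α ((b₁.repr x).sum fun i c => c • b₁ i)) := by
          rw [map_finsuppSum α, map_finsuppSum (ρ σ)]
          refine (Finsupp.sum_congr fun i _ => ?_).symm
          rw [map_smul, hα, hsemi, hb₂ (e i) σ]
  refine ⟨α, fun σ m => ?_⟩
  have h := key σ ((ρ σ).symm m)
  rw [(ρ σ).apply_symm_apply] at h
  rw [← h, α.symm_apply_apply]
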